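/- arXiv:1608.07390 — 3 statements merged into one kernel-verified Lean document; each statement's English description precedes it below -/
import Mathlib

section
/- If G and H are connected non-complete finite simple graphs, then the toll number of the Cartesian product G □ H equals 2. -/
open SimpleGraph

/-- A walk `W` between `u` and `v` is a *tolled walk* if either `u = v` and `W` is trivial,
or `u` and `v` are adjacent and `W` is the single-edge walk, or `u ≠ v` are non-adjacent,
`W` has at least one interior vertex, `u` is adjacent exactly to the interior vertex
at position 1 and `v` exactly to the interior vertex at position `W.length - 1`. -/
def IsTolledWalk {V : Type*} (G : SimpleGraph V) {u v : V} (W : G.Walk u v) : Prop :=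
  (u = v ∧ W.length = 0) ∨
  (G.Adj u v ∧ W.support = [u, v]) ∨
  (¬ G.Adj u v ∧ u ≠ v ∧ 2 ≤ W.length ∧
    (∀ i, 0 < i → i < W.length → (G.Adj u (W.support.getD i u) ↔ i = 1)) ∧
    (∀ i, 0 < i → i < W.length → (G.Adj v (W.support.getD i u) ↔ i = W.length - 1)))

/-- The toll interval between `u` and `v`: vertices lying on some tolled walk. -/
def tollInterval {V : Type*} (G : SimpleGraph V) (u v : V) : Set V :=
  {x | ∃ W : G.Walk u v, IsTolledWalk G W ∧ x ∈ W.support}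

/-- A toll set: the toll intervals between its pairs cover the vertex set. -/
def IsTollSet {V : Type*} (G : SimpleGraph V) (S : Set V) : Prop :=
  ∀ x : V, ∃ u ∈ S, ∃ v ∈ S, x ∈ tollInterval G u v

/-- The toll number: minimum size of a toll set. -/
noncomputable def tollNumber {V : Type*} (G : SimpleGraph V) : ℕ :=
  sInf {n | ∃ S : Set V, S.Finite ∧ S.ncard = n ∧ IsTollSet G S}

/-- `v` is a cut vertex if deleting it disconnects the graph. -/
def IsCutVertex {V : Type*} (G : SimpleGraph V) (v : V) : Prop :=
  ¬ (G.induce {w | w ≠ v}).Preconnected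

/-- The extreme vertices of `G` with respect to toll convexity. -/
def extremeVertices {V : Type*} (G : SimpleGraph V) : Set V :=
  {s | ∀ x y : V, x ≠ s → y ≠ s → s ∉ tollInterval G x y}

/-- The lexicographic product of simple graphs. -/
def lexProd {V W : Type*} (G : SimpleGraph V) (H : SimpleGraph W) : SimpleGraph (V × W) where
  Adj a b := G.Adj a.1 b.1 ∨ (a.1 = b.1 ∧ H.Adj a.2 b.2)
  symm := by
    constructor
    rintro a b (h | ⟨h1, h2⟩)
    · exact Or.inl h.symm
    · exact Or.inr ⟨h1.symm, h2.symm⟩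
  loopless := by
    constructor
    rintro a (h | ⟨_, h⟩)
    · exact G.irrefl h
    · exact H.irrefl h


namespace TollAux

variable {V : Type*} {W : Type*}

/-- reachability in `G` avoiding `p`. -/
def RA (G : SimpleGraph V) (p : V) : V → V → Prop :=
  Relation.ReflTransGen (fun a b => G.Adj a b ∧ a ≠ p ∧ b ≠ p)

lemma RA_ne {G : SimpleGraph V} {p x y : V} (h : RA G p x y) (hx : x ≠ p) : y ≠ p := by
  induction h with
  | refl => exact hx
  | tail _ hstep _ => exact hstep.2.2

/-- no component of `G - p` is contained in the neighbourhood of `p`. -/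
def NonConfining (G : SimpleGraph V) (p : V) : Prop :=
  ∀ x, x ≠ p → ∃ y, RA G p x y ∧ ¬ G.Adj p y ∧ y ≠ p

lemma nontriv_of_ne_top {G : SimpleGraph V} (hne : G ≠ ⊤) :
    ∃ a b : V, a ≠ b ∧ ¬ G.Adj a b := by
  by_contra h
  push_neg at h
  apply hne
  ext a b
  simp only [top_adj]
  exact ⟨fun hab => hab.ne, fun hab => h a b hab⟩

lemma exists_nonconfining [Fintype V] {G : SimpleGraph V} (hc : G.Connected) (hne : G ≠ ⊤) :
    ∃ p, NonConfining G p := by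
  classical
  by_contra hcon
  push_neg at hcon
  have hcon' : ∀ p : V, ∃ x, x ≠ p ∧ ∀ y, RA G p x y → G.Adj p y := by
    intro p
    have h := hcon p
    unfold NonConfining at h
    push_neg at h
    obtain ⟨x, hx1, hx2⟩ := h
    refine ⟨x, hx1, fun y hy => ?_⟩
    by_contra hadj
    exact (RA_ne hy hx1) (hx2 y hy hadj)
  obtain ⟨a₀, b₀, hab, hnadj⟩ := nontriv_of_ne_top hne
  set Ns : Set ℕ :=
    {n | ∃ p x, x ≠ p ∧ (∀ y, RA G p x y → G.Adj p y) ∧ n = Set.ncard {y | RA G p x y}}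
    with hNsdef
  have hNs : Ns.Nonempty := by
    obtain ⟨x, hx1, hx2⟩ := hcon' a₀
    exact ⟨_, a₀, x, hx1, hx2, rfl⟩
  obtain ⟨p, x, hxp, hwit, hn⟩ := Nat.sInf_mem hNs
  set S₀ : Set V := {y | RA G p x y} with hS₀def
  have hxS : x ∈ S₀ := Relation.ReflTransGen.refl
  have hS₀p : ∀ y ∈ S₀, y ≠ p := fun y hy => RA_ne hy hxp
  obtain ⟨z, hzx, hzwit⟩ := hcon' x
  set D : Set V := {y | RA G x z y} with hDdef
  have hDadj : ∀ y ∈ D, G.Adj x y := fun y hy => hzwit y hy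
  have hDx : ∀ y ∈ D, y ≠ x := fun y hy => (hDadj y hy).ne'
  have hDsub : ∀ y ∈ D, y ∈ S₀ ∨ y = p := by
    intro y hy
    by_cases hyp : y = p
    · exact Or.inr hyp
    · exact Or.inl (Relation.ReflTransGen.single ⟨hDadj y hy, hxp, hyp⟩)
  by_cases hpD : p ∈ D
  · by_cases hw : ∃ w, w ∉ S₀ ∧ w ≠ p
    · obtain ⟨w, hwS, hwp⟩ := hw
      have key : ∀ s, Relation.ReflTransGen G.Adj x s → (s = x ∨ s ∈ S₀ ∨ RA G x p s) := by
        intro s hs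
        induction hs with
        | refl => exact Or.inl rfl
        | @tail b c _ hadj ih =>
          rcases ih with rfl | hbS | hbp
          · by_cases hcp : c = p
            · subst hcp; exact Or.inr (Or.inr Relation.ReflTransGen.refl)
            · exact Or.inr (Or.inl (Relation.ReflTransGen.single ⟨hadj, hxp, hcp⟩))
          · by_cases hcx : c = x
            · exact Or.inl hcx
            · by_cases hcp : c = p
              · subst hcp; exact Or.inr (Or.inr Relation.ReflTransGen.refl)
              · exact Or.inr (Or.inl (hbS.tail ⟨hadj, hS₀p _ hbS, hcp⟩))
          · by_cases hcx : c = x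
            · exact Or.inl hcx
            · exact Or.inr (Or.inr (hbp.tail ⟨hadj, RA_ne hbp (fun h => hxp h.symm), hcx⟩))
      have hreach : Relation.ReflTransGen G.Adj x w :=
        (reachable_iff_reflTransGen x w).mp (hc.preconnected x w)
      rcases key w hreach with rfl | h | h
      · exact hwS hxS
      · exact hwS h
      · have hwD : w ∈ D := Relation.ReflTransGen.trans hpD h
        rcases hDsub w hwD with h' | h'
        · exact hwS h'
        · exact hwp h'
    · push_neg at hw
      have hcompl : ∀ c : V, ({y | y ≠ c} : Set V).ncard = Fintype.card V - 1 := by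
        intro c
        have h1 : ({y | y ≠ c} : Set V) = Set.univ \ {c} := by
          ext y; simp [Set.mem_diff]
        rw [h1, Set.ncard_diff (by simp) (Set.toFinite _), Set.ncard_univ, Set.ncard_singleton,
          Nat.card_eq_fintype_card]
      have hS₀eq : S₀ = {y | y ≠ p} := by
        ext y
        constructor
        · exact fun hy => hS₀p y hy
        · intro hy
          by_contra h
          exact hy (hw y h)
      apply hne
      ext c d
      simp only [top_adj]
      constructor
      · exact fun h => h.ne
      · intro hcd
        obtain ⟨zb, hzb1, hzb2⟩ := hcon' c
        have hsub : {y | RA G c zb y} ⊆ {y | y ≠ c} := fun y hy => RA_ne hy hzb1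
        have hmin : S₀.ncard ≤ ({y | RA G c zb y}).ncard := by
          rw [← hn]
          exact Nat.sInf_le ⟨c, zb, hzb1, hzb2, rfl⟩
        have heq : {y | RA G c zb y} = {y | y ≠ c} := by
          apply Set.eq_of_subset_of_ncard_le hsub _ (Set.toFinite _)
          have h1 : S₀.ncard = Fintype.card V - 1 := by rw [hS₀eq, hcompl p]
          rw [hcompl c, ← h1]
          exact hmin
        have hd : d ∈ {y | RA G c zb y} := by
          rw [heq]; exact fun h => hcd h.symm
        exact hzb2 d hd
  · have hDS : D ⊆ S₀ := fun y hy => (hDsub y hy).resolve_right (fun h => hpD (h ▸ hy))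
    have hss : D ⊂ S₀ := ⟨hDS, fun hsub => (hDx x (hsub hxS)) rfl⟩
    have hlt : D.ncard < S₀.ncard := Set.ncard_lt_ncard hss (Set.toFinite _)
    have hmin : S₀.ncard ≤ D.ncard := by
      rw [← hn]
      exact Nat.sInf_le ⟨x, z, hzx, hzwit, rfl⟩
    omega

/-- predicate: `s` lies outside the closed neighbourhood of `c`. -/
def Yp (P : SimpleGraph (V × W)) (c s : V × W) : Prop := ¬ P.Adj c s ∧ s ≠ c

/-- reachability within the complement of the closed neighbourhood of `c`. -/
def RY (P : SimpleGraph (V × W)) (c : V × W) : (V × W) → (V × W) → Prop :=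
  Relation.ReflTransGen (fun s t => P.Adj s t ∧ Yp P c s ∧ Yp P c t)

lemma claimM {G : SimpleGraph V} {H : SimpleGraph W} (hGc : G.Connected) (hHc : H.Connected)
    {p a : V} {q b : W} (hpa : ¬ G.Adj p a) (hpa' : p ≠ a)
    (hqb : ¬ H.Adj q b) (hqb' : q ≠ b)
    (hgood : NonConfining G p ∨ NonConfining H q) :
    ∀ t : V × W, Yp (G □ H) (p, q) t → RY (G □ H) (p, q) t (a, b) := by
  have hYrow : ∀ y : W, ¬ H.Adj q y → y ≠ q → ∀ x : V, Yp (G □ H) (p, q) (x, y) := by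
    intro y hy1 hy2 x
    constructor
    · intro hadj
      rcases boxProd_adj.mp hadj with ⟨_, h⟩ | ⟨h, _⟩
      · exact hy2 h.symm
      · exact hy1 h
    · intro h
      exact hy2 (congrArg Prod.snd h)
  have hYcol : ∀ x : V, ¬ G.Adj p x → x ≠ p → ∀ y : W, Yp (G □ H) (p, q) (x, y) := by
    intro x hx1 hx2 y
    constructor
    · intro hadj
      rcases boxProd_adj.mp hadj with ⟨h, _⟩ | ⟨_, h⟩
      · exact hx1 h
      · exact hx2 h.symm
    · intro h
      exact hx2 (congrArg Prod.fst h)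
  have rowMove : ∀ y : W, (∀ x, Yp (G □ H) (p, q) (x, y)) → ∀ x x' : V,
      RY (G □ H) (p, q) (x, y) (x', y) := by
    intro y hy x x'
    have hr : Relation.ReflTransGen G.Adj x x' :=
      (reachable_iff_reflTransGen x x').mp (hGc.preconnected x x')
    exact Relation.ReflTransGen.lift (p := fun s t => (G □ H).Adj s t ∧ Yp (G □ H) (p, q) s ∧ Yp (G □ H) (p, q) t) (fun z => (z, y))
      (fun z z' hzz => ⟨boxProd_adj.mpr (Or.inl ⟨hzz, rfl⟩), hy z, hy z'⟩) _ _ hr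
  have colMove : ∀ x : V, (∀ y, Yp (G □ H) (p, q) (x, y)) → ∀ y y' : W,
      RY (G □ H) (p, q) (x, y) (x, y') := by
    intro x hx y y'
    have hr : Relation.ReflTransGen H.Adj y y' :=
      (reachable_iff_reflTransGen y y').mp (hHc.preconnected y y')
    exact Relation.ReflTransGen.lift (p := fun s t => (G □ H).Adj s t ∧ Yp (G □ H) (p, q) s ∧ Yp (G □ H) (p, q) t) (fun z => (x, z))
      (fun z z' hzz => ⟨boxProd_adj.mpr (Or.inr ⟨hzz, rfl⟩), hx z, hx z'⟩) _ _ hr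
  have colAvoid : ∀ x : V, x ≠ p → ∀ {z z' : W}, RA H q z z' →
      RY (G □ H) (p, q) (x, z) (x, z') := by
    intro x hxp z z' h
    refine Relation.ReflTransGen.lift (fun y => (x, y)) ?_ _ _ h
    rintro y y' ⟨hadj, hy, hy'⟩
    refine ⟨boxProd_adj.mpr (Or.inr ⟨hadj, rfl⟩), ?_, ?_⟩
    · refine ⟨?_, fun h2 => hxp (congrArg Prod.fst h2)⟩
      intro hadj2
      rcases boxProd_adj.mp hadj2 with ⟨_, h2⟩ | ⟨_, h2⟩
      · exact hy h2.symm
      · exact hxp h2.symm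
    · refine ⟨?_, fun h2 => hxp (congrArg Prod.fst h2)⟩
      intro hadj2
      rcases boxProd_adj.mp hadj2 with ⟨_, h2⟩ | ⟨_, h2⟩
      · exact hy' h2.symm
      · exact hxp h2.symm
  have rowAvoid : ∀ y : W, y ≠ q → ∀ {z z' : V}, RA G p z z' →
      RY (G □ H) (p, q) (z, y) (z', y) := by
    intro y hyq z z' h
    refine Relation.ReflTransGen.lift (fun x => (x, y)) ?_ _ _ h
    rintro x x' ⟨hadj, hx, hx'⟩
    refine ⟨boxProd_adj.mpr (Or.inl ⟨hadj, rfl⟩), ?_, ?_⟩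
    · refine ⟨?_, fun h2 => hyq (congrArg Prod.snd h2)⟩
      intro hadj2
      rcases boxProd_adj.mp hadj2 with ⟨_, h2⟩ | ⟨_, h2⟩
      · exact hyq h2.symm
      · exact hx h2.symm
    · refine ⟨?_, fun h2 => hyq (congrArg Prod.snd h2)⟩
      intro hadj2
      rcases boxProd_adj.mp hadj2 with ⟨_, h2⟩ | ⟨_, h2⟩
      · exact hyq h2.symm
      · exact hx' h2.symm
  rintro ⟨x, y⟩ hY
  by_cases hyq : y = q
  · subst hyq
    have hx1 : ¬ G.Adj p x := by
      intro h
      exact hY.1 (boxProd_adj.mpr (Or.inl ⟨h, rfl⟩))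
    have hx2 : x ≠ p := fun h => hY.2 (by rw [h])
    exact (colMove x (hYcol x hx1 hx2) y b).trans
      (rowMove b (hYrow b hqb (Ne.symm hqb')) x a)
  · by_cases hyN : H.Adj q y
    · have hxp : x ≠ p := by
        intro h
        exact hY.1 (boxProd_adj.mpr (Or.inr ⟨hyN, h.symm⟩))
      rcases hgood with hGg | hHg
      · obtain ⟨x', hx'path, hx'1, hx'2⟩ := hGg x hxp
        exact ((rowAvoid y hyq hx'path).trans
          (colMove x' (hYcol x' hx'1 hx'2) y b)).trans
          (rowMove b (hYrow b hqb (Ne.symm hqb')) x' a)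
      · obtain ⟨y', hy'path, hy'1, hy'2⟩ := hHg y hyq
        exact ((colAvoid x hxp hy'path).trans
          (rowMove y' (hYrow y' hy'1 hy'2) x a)).trans
          (colMove a (hYcol a hpa (Ne.symm hpa')) y' b)
    · exact (rowMove y (hYrow y hyN hyq) x a).trans
        (colMove a (hYcol a hpa (Ne.symm hpa')) y b)

lemma walk_of_rtg {α : Type*} {P : SimpleGraph α} {Fp : α → Prop} {c d : α}
    (h : Relation.ReflTransGen (fun s t => P.Adj s t ∧ Fp s ∧ Fp t) c d) (hc : Fp c) :
    ∃ w : P.Walk c d, ∀ s ∈ w.support, Fp s := by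
  induction h with
  | refl =>
    refine ⟨SimpleGraph.Walk.nil, ?_⟩
    intro s hs
    rw [SimpleGraph.Walk.support_nil, List.mem_singleton] at hs
    rwa [hs]
  | @tail e f _ hstep ih =>
    obtain ⟨w, hw⟩ := ih
    refine ⟨w.concat hstep.1, ?_⟩
    intro s hs
    rw [SimpleGraph.Walk.support_concat] at hs
    rcases List.mem_append.mp hs with h' | h'
    · exact hw s h'
    · rw [List.mem_singleton] at h'
      rw [h']
      exact hstep.2.2

lemma tolled_of_parts {α : Type*} {P : SimpleGraph α} {u v s1 s2 c1 c2 : α}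
    (hus1 : P.Adj u s1) (hs1c1 : P.Adj s1 c1) (mid : P.Walk c1 c2)
    (hc2s2 : P.Adj c2 s2) (hs2v : P.Adj s2 v)
    (huv : ¬ P.Adj u v) (hune : u ≠ v)
    (hvs1 : ¬ P.Adj v s1) (hus2 : ¬ P.Adj u s2)
    (hmid : ∀ x ∈ mid.support, ¬ P.Adj u x ∧ ¬ P.Adj v x) :
    ∃ Wk : P.Walk u v, IsTolledWalk P Wk ∧ s1 ∈ Wk.support ∧ s2 ∈ Wk.support ∧
      (∀ x ∈ mid.support, x ∈ Wk.support) ∧ u ∈ Wk.support ∧ v ∈ Wk.support := by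
  set W3 : P.Walk c1 v := (mid.concat hc2s2).concat hs2v with hW3
  set Wk : P.Walk u v := SimpleGraph.Walk.cons hus1 (SimpleGraph.Walk.cons hs1c1 W3) with hWk
  have hsupp : Wk.support = u :: s1 :: (mid.support ++ [s2, v]) := by
    rw [hWk, hW3]
    rw [SimpleGraph.Walk.support_cons, SimpleGraph.Walk.support_cons,
      SimpleGraph.Walk.support_concat, SimpleGraph.Walk.support_concat,
      List.append_assoc]
    rfl
  have hlen : Wk.length = mid.length + 4 := by
    rw [hWk, hW3]
    rw [SimpleGraph.Walk.length_cons, SimpleGraph.Walk.length_cons,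
      SimpleGraph.Walk.length_concat, SimpleGraph.Walk.length_concat]
  have hmsl : mid.support.length = mid.length + 1 := SimpleGraph.Walk.length_support mid
  have hget : ∀ i, 0 < i → i < Wk.length →
      (Wk.support.getD i u = s1 ∧ i = 1) ∨
      (∃ x ∈ mid.support, Wk.support.getD i u = x ∧ 2 ≤ i ∧ i ≤ mid.length + 2) ∨
      (Wk.support.getD i u = s2 ∧ i = mid.length + 3) := by
    intro i h0 hi
    rw [hlen] at hi
    rw [hsupp]
    match i, h0 with
    | 1, _ => exact Or.inl ⟨rfl, rfl⟩
    | (n+2), _ =>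
      have h2 : (u :: s1 :: (mid.support ++ [s2, v])).getD (n + 2) u
          = (mid.support ++ [s2, v]).getD n u := by
        rw [List.getD_cons_succ, List.getD_cons_succ]
      rw [h2]
      by_cases hn : n < mid.support.length
      · refine Or.inr (Or.inl ⟨(mid.support ++ [s2, v]).getD n u, ?_, rfl, by omega, by omega⟩)
        rw [List.getD_append _ _ _ _ hn, List.getD_eq_getElem _ _ hn]
        exact List.getElem_mem hn
      · have hn2 : n = mid.length + 1 := by omega
        subst hn2
        rw [List.getD_append_right _ _ _ _ (by omega)]
        have h3 : mid.length + 1 - mid.support.length = 0 := by omega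
        rw [h3]
        exact Or.inr (Or.inr ⟨rfl, rfl⟩)
  refine ⟨Wk, ?_, ?_, ?_, ?_, ?_, ?_⟩
  · refine Or.inr (Or.inr ⟨huv, hune, by omega, ?_, ?_⟩)
    · intro i h0 hi
      rcases hget i h0 hi with ⟨he, hi1⟩ | ⟨x, hx, he, hge, hle⟩ | ⟨he, hi3⟩
      · rw [he, hi1]
        simp [hus1]
      · rw [he]
        constructor
        · intro h'
          exact absurd h' (hmid x hx).1
        · intro h'
          omega
      · rw [he]
        constructor
        · intro h'
          exact absurd h' hus2
        · intro h'
          omega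
    · intro i h0 hi
      have hL : Wk.length - 1 = mid.length + 3 := by omega
      rw [hL]
      rcases hget i h0 hi with ⟨he, hi1⟩ | ⟨x, hx, he, hge, hle⟩ | ⟨he, hi3⟩
      · rw [he, hi1]
        constructor
        · intro h'
          exact absurd h' hvs1
        · intro h'
          omega
      · rw [he]
        constructor
        · intro h'
          exact absurd h' (hmid x hx).2
        · intro h'
          omega
      · rw [he, hi3]
        simp [hs2v.symm]
  · rw [hsupp]
    simp
  · rw [hsupp]
    simp
  · intro x hx
    rw [hsupp]
    simp [hx]
  · rw [hsupp]
    simp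
  · rw [hsupp]
    simp

lemma tollInterval_self {α : Type*} (P : SimpleGraph α) (s z : α)
    (hz : z ∈ tollInterval P s s) : z = s := by
  obtain ⟨Wk, htw, hmem⟩ := hz
  rcases htw with ⟨_, hlen⟩ | ⟨hadj, _⟩ | ⟨_, hne, _⟩
  · rw [SimpleGraph.Walk.eq_nil_iff_nil.mpr (SimpleGraph.Walk.length_eq_zero_iff.mp hlen), SimpleGraph.Walk.support_nil,
      List.mem_singleton] at hmem
    exact hmem
  · exact absurd hadj (P.irrefl (v := s))
  · exact absurd rfl hne

lemma isTollSet_pair {G : SimpleGraph V} {H : SimpleGraph W}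
    (hGc : G.Connected) (hHc : H.Connected)
    {g1 g2 : V} {h1 h2 : W}
    (hgadj : ¬ G.Adj g1 g2) (hgne : g1 ≠ g2)
    (hhadj : ¬ H.Adj h1 h2) (hhne : h1 ≠ h2)
    (hgood1 : NonConfining G g1) (hgood2 : NonConfining H h2) :
    IsTollSet (G □ H) {((g1, h1) : V × W), (g2, h2)} := by
  classical
  have hGadjnbr : ∀ z : V, ∃ z', G.Adj z z' := by
    intro z
    have hz : ∃ w : V, w ≠ z := by
      by_cases h : g1 = z
      · exact ⟨g2, fun hh => hgne (h ▸ hh.symm ▸ rfl)⟩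
      · exact ⟨g1, h⟩
    obtain ⟨w, hw⟩ := hz
    have hr := (reachable_iff_reflTransGen z w).mp (hGc.preconnected z w)
    rcases hr.cases_head with h | ⟨c, hc, _⟩
    · exact absurd h (Ne.symm hw)
    · exact ⟨c, hc⟩
  have hHadjnbr : ∀ z : W, ∃ z', H.Adj z z' := by
    intro z
    have hz : ∃ w : W, w ≠ z := by
      by_cases h : h1 = z
      · exact ⟨h2, fun hh => hhne (h ▸ hh.symm ▸ rfl)⟩
      · exact ⟨h1, h⟩
    obtain ⟨w, hw⟩ := hz
    have hr := (reachable_iff_reflTransGen z w).mp (hHc.preconnected z w)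
    rcases hr.cases_head with h | ⟨c, hc, _⟩
    · exact absurd h (Ne.symm hw)
    · exact ⟨c, hc⟩
  have hdisj : ∀ t : V × W, (G □ H).Adj (g1, h1) t → (G □ H).Adj (g2, h2) t → False := by
    rintro ⟨x, y⟩ h1t h2t
    rcases boxProd_adj.mp h1t with ⟨ha, hb⟩ | ⟨ha, hb⟩ <;>
      rcases boxProd_adj.mp h2t with ⟨hc, hd⟩ | ⟨hc, hd⟩
    · exact hhne (hb.trans hd.symm)
    · rw [← hb] at hc
      exact hhadj hc.symm
    · rw [← hb] at hc
      exact hgadj hc.symm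
    · exact hgne (hb.trans hd.symm)
  have huv : ¬ (G □ H).Adj (g1, h1) (g2, h2) := by
    intro h
    rcases boxProd_adj.mp h with ⟨_, h'⟩ | ⟨h', _⟩
    · exact hhne h'
    · exact hhadj h'
  have hune : ((g1, h1) : V × W) ≠ (g2, h2) := fun h => hgne (congrArg Prod.fst h)
  set Fp : V × W → Prop := fun s =>
    ¬ (G □ H).Adj (g1, h1) s ∧ ¬ (G □ H).Adj (g2, h2) s ∧ s ≠ (g1, h1) ∧ s ≠ (g2, h2)
    with hFpdef
  set RF : (V × W) → (V × W) → Prop :=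
    Relation.ReflTransGen (fun s t => (G □ H).Adj s t ∧ Fp s ∧ Fp t) with hRFdef
  have RF_F : ∀ {s t}, RF s t → Fp s → Fp t := by
    intro s t h hs
    induction h with
    | refl => exact hs
    | tail _ hstep _ => exact hstep.2.2
  have RF_symm : ∀ {s t}, RF s t → RF t s := by
    intro s t h
    induction h with
    | refl => exact Relation.ReflTransGen.refl
    | tail _ hstep ih =>
      exact Relation.ReflTransGen.trans
        (Relation.ReflTransGen.single ⟨hstep.1.symm, hstep.2.2, hstep.2.1⟩) ih
  have M_u := claimM hGc hHc hgadj hgne hhadj hhne (Or.inl hgood1)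
  have M_v := claimM hGc hHc (fun h => hgadj h.symm) hgne.symm
    (fun h => hhadj h.symm) hhne.symm (Or.inr hgood2)
  have reachNv : ∀ t, Fp t → ∃ c s, RF t c ∧ (G □ H).Adj c s ∧ (G □ H).Adj (g2, h2) s := by
    intro t ht
    by_contra hno
    push_neg at hno
    have key : ∀ s, RY (G □ H) (g1, h1) t s → RF t s := by
      intro s hs
      induction hs with
      | refl => exact Relation.ReflTransGen.refl
      | @tail e f _ hstep ih =>
        have hFe : Fp e := RF_F ih ht
        have hFf : Fp f := by
          refine ⟨hstep.2.2.1, ?_, hstep.2.2.2, ?_⟩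
          · intro hvf
            exact hno e f ih hstep.1 hvf
          · intro hfv
            rw [hfv] at hstep
            exact hFe.2.1 hstep.1.symm
        exact ih.tail ⟨hstep.1, hFe, hFf⟩
    have hfin := key (g2, h2) (M_u t ⟨ht.1, ht.2.2.1⟩)
    exact (RF_F hfin ht).2.2.2 rfl
  have reachNu : ∀ t, Fp t → ∃ c s, RF t c ∧ (G □ H).Adj c s ∧ (G □ H).Adj (g1, h1) s := by
    intro t ht
    by_contra hno
    push_neg at hno
    have key : ∀ s, RY (G □ H) (g2, h2) t s → RF t s := by
      intro s hs
      induction hs with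
      | refl => exact Relation.ReflTransGen.refl
      | @tail e f _ hstep ih =>
        have hFe : Fp e := RF_F ih ht
        have hFf : Fp f := by
          refine ⟨?_, hstep.2.2.1, ?_, hstep.2.2.2⟩
          · intro huf
            exact hno e f ih hstep.1 huf
          · intro hfu
            rw [hfu] at hstep
            exact hFe.1 hstep.1.symm
        exact ih.tail ⟨hstep.1, hFe, hFf⟩
    have hfin := key (g1, h1) (M_v t ⟨ht.2.1, ht.2.2.2⟩)
    exact (RF_F hfin ht).2.2.1 rfl
  have tolled_through : ∀ t, Fp t →
      ∃ Wk : (G □ H).Walk (g1, h1) (g2, h2), IsTolledWalk (G □ H) Wk ∧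
        t ∈ Wk.support ∧ (g1, h1) ∈ Wk.support ∧ (g2, h2) ∈ Wk.support := by
    intro t ht
    obtain ⟨c1, s1, hrc1, hc1s1, hus1⟩ := reachNu t ht
    obtain ⟨c2, s2, hrc2, hc2s2, hvs2⟩ := reachNv t ht
    obtain ⟨w1, hw1⟩ := walk_of_rtg (RF_symm hrc1) (RF_F hrc1 ht)
    obtain ⟨w2, hw2⟩ := walk_of_rtg hrc2 ht
    have hmidsup : ∀ x ∈ (w1.append w2).support, Fp x := by
      intro x hx
      rw [SimpleGraph.Walk.support_append] at hx
      rcases List.mem_append.mp hx with h | h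
      · exact hw1 x h
      · exact hw2 x (List.mem_of_mem_tail h)
    obtain ⟨Wk, htw, _, _, hmm, hum, hvm⟩ :=
      tolled_of_parts hus1 hc1s1.symm (w1.append w2) hc2s2 hvs2.symm huv hune
        (fun h => hdisj s1 hus1 h) (fun h => hdisj s2 h hvs2)
        (fun x hx => ⟨(hmidsup x hx).1, (hmidsup x hx).2.1⟩)
    refine ⟨Wk, htw, ?_, hum, hvm⟩
    apply hmm
    rw [SimpleGraph.Walk.support_append]
    exact List.mem_append.mpr (Or.inl (SimpleGraph.Walk.end_mem_support w1))
  have nbrU : ∀ t, (G □ H).Adj (g1, h1) t → ∃ c, (G □ H).Adj t c ∧ Fp c := by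
    rintro ⟨x, y⟩ hadj
    rcases boxProd_adj.mp hadj with ⟨ha, hb⟩ | ⟨ha, hb⟩
    · -- t = (x, h1) with G.Adj g1 x
      obtain ⟨y₀, hy₀⟩ := hHadjnbr h1
      have hxg2 : x ≠ g2 := fun h => hgadj (h ▸ ha)
      have hy₀h2 : y₀ ≠ h2 := fun h => hhadj (h ▸ hy₀)
      refine ⟨(x, y₀), ?_, ?_, ?_, ?_, ?_⟩
      · exact boxProd_adj.mpr (Or.inr ⟨hb ▸ hy₀, rfl⟩)
      · intro h
        rcases boxProd_adj.mp h with ⟨_, h'⟩ | ⟨_, h'⟩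
        · exact hy₀.ne h'
        · exact ha.ne h'
      · intro h
        rcases boxProd_adj.mp h with ⟨h', h''⟩ | ⟨h', h''⟩
        · exact hy₀h2 h''.symm
        · exact hxg2 h''.symm
      · intro h
        exact ha.ne (congrArg Prod.fst h).symm
      · intro h
        exact hxg2 (congrArg Prod.fst h)
    · -- t = (g1, y) with H.Adj h1 y
      obtain ⟨x₀, hx₀⟩ := hGadjnbr g1
      have hyh2 : y ≠ h2 := fun h => hhadj (h ▸ ha)
      have hx₀g2 : x₀ ≠ g2 := fun h => hgadj (h ▸ hx₀)
      refine ⟨(x₀, y), ?_, ?_, ?_, ?_, ?_⟩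
      · exact boxProd_adj.mpr (Or.inl ⟨hb ▸ hx₀, rfl⟩)
      · intro h
        rcases boxProd_adj.mp h with ⟨_, h'⟩ | ⟨_, h'⟩
        · exact ha.ne h'
        · exact hx₀.ne h'
      · intro h
        rcases boxProd_adj.mp h with ⟨h', h''⟩ | ⟨h', h''⟩
        · exact hyh2 h''.symm
        · exact hx₀g2 h''.symm
      · intro h
        exact hx₀.ne (congrArg Prod.fst h).symm
      · intro h
        exact hx₀g2 (congrArg Prod.fst h)
  have nbrV : ∀ t, (G □ H).Adj (g2, h2) t → ∃ c, (G □ H).Adj t c ∧ Fp c := by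
    rintro ⟨x, y⟩ hadj
    rcases boxProd_adj.mp hadj with ⟨ha, hb⟩ | ⟨ha, hb⟩
    · -- t = (x, h2) with G.Adj g2 x
      obtain ⟨y₀, hy₀⟩ := hHadjnbr h2
      have hxg1 : x ≠ g1 := fun h => hgadj (h ▸ ha).symm
      have hy₀h1 : y₀ ≠ h1 := fun h => hhadj (h ▸ hy₀).symm
      refine ⟨(x, y₀), ?_, ?_, ?_, ?_, ?_⟩
      · exact boxProd_adj.mpr (Or.inr ⟨hb ▸ hy₀, rfl⟩)
      · intro h
        rcases boxProd_adj.mp h with ⟨h', h''⟩ | ⟨h', h''⟩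
        · exact hy₀h1 h''.symm
        · exact hxg1 h''.symm
      · intro h
        rcases boxProd_adj.mp h with ⟨_, h'⟩ | ⟨_, h'⟩
        · exact hy₀.ne h'
        · exact ha.ne h'
      · intro h
        exact hxg1 (congrArg Prod.fst h)
      · intro h
        exact ha.ne (congrArg Prod.fst h).symm
    · -- t = (g2, y) with H.Adj h2 y
      obtain ⟨x₀, hx₀⟩ := hGadjnbr g2
      have hyh1 : y ≠ h1 := fun h => hhadj (h ▸ ha).symm
      have hx₀g1 : x₀ ≠ g1 := fun h => hgadj (h ▸ hx₀).symm
      refine ⟨(x₀, y), ?_, ?_, ?_, ?_, ?_⟩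
      · exact boxProd_adj.mpr (Or.inl ⟨hb ▸ hx₀, rfl⟩)
      · intro h
        rcases boxProd_adj.mp h with ⟨h', h''⟩ | ⟨h', h''⟩
        · exact hyh1 h''.symm
        · exact hx₀g1 h''.symm
      · intro h
        rcases boxProd_adj.mp h with ⟨_, h'⟩ | ⟨_, h'⟩
        · exact ha.ne h'
        · exact hx₀.ne h'
      · intro h
        exact hx₀g1 (congrArg Prod.fst h)
      · intro h
        exact hx₀.ne (congrArg Prod.fst h).symm
  intro t
  refine ⟨(g1, h1), Or.inl rfl, (g2, h2), Or.inr rfl, ?_⟩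
  by_cases hut : (G □ H).Adj (g1, h1) t
  · obtain ⟨c1, htc1, hFc1⟩ := nbrU t hut
    obtain ⟨c2, s2, hrc2, hc2s2, hvs2⟩ := reachNv c1 hFc1
    obtain ⟨mw, hmw⟩ := walk_of_rtg hrc2 hFc1
    obtain ⟨Wk, htw, hs1m, _, _, _, _⟩ :=
      tolled_of_parts hut htc1 mw hc2s2 hvs2.symm huv hune
        (fun h => hdisj t hut h) (fun h => hdisj s2 h hvs2)
        (fun x hx => ⟨(hmw x hx).1, (hmw x hx).2.1⟩)
    exact ⟨Wk, htw, hs1m⟩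
  · by_cases hvt : (G □ H).Adj (g2, h2) t
    · obtain ⟨c2, htc2, hFc2⟩ := nbrV t hvt
      obtain ⟨c1, s1, hrc1, hc1s1, hus1⟩ := reachNu c2 hFc2
      obtain ⟨mw, hmw⟩ := walk_of_rtg (RF_symm hrc1) (RF_F hrc1 hFc2)
      obtain ⟨Wk, htw, _, hs2m, _, _, _⟩ :=
        tolled_of_parts hus1 hc1s1.symm mw htc2.symm hvt.symm huv hune
          (fun h => hdisj s1 hus1 h) hut
          (fun x hx => ⟨(hmw x hx).1, (hmw x hx).2.1⟩)
      exact ⟨Wk, htw, hs2m⟩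
    · by_cases htu : t = (g1, h1) ∨ t = (g2, h2)
      · obtain ⟨x₀, hx₀⟩ := hGadjnbr g1
        obtain ⟨y₀, hy₀⟩ := hHadjnbr h1
        have hx₀g2 : x₀ ≠ g2 := fun h => hgadj (h ▸ hx₀)
        have hy₀h2 : y₀ ≠ h2 := fun h => hhadj (h ▸ hy₀)
        have hF0 : Fp (x₀, y₀) := by
          refine ⟨?_, ?_, ?_, ?_⟩
          · intro h
            rcases boxProd_adj.mp h with ⟨_, h'⟩ | ⟨_, h'⟩
            · exact hy₀.ne h'
            · exact hx₀.ne h'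
          · intro h
            rcases boxProd_adj.mp h with ⟨_, h'⟩ | ⟨_, h'⟩
            · exact hy₀h2 h'.symm
            · exact hx₀g2 h'.symm
          · intro h
            exact hx₀.ne (congrArg Prod.fst h).symm
          · intro h
            exact hx₀g2 (congrArg Prod.fst h)
        obtain ⟨Wk, htw, _, hum, hvm⟩ := tolled_through _ hF0
        rcases htu with rfl | rfl
        · exact ⟨Wk, htw, hum⟩
        · exact ⟨Wk, htw, hvm⟩
      · push_neg at htu
        have hFt : Fp t := ⟨hut, hvt, htu.1, htu.2⟩
        obtain ⟨Wk, htw, htm, _, _⟩ := tolled_through t hFt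
        exact ⟨Wk, htw, htm⟩

end TollAux

theorem stmt2 {V W : Type*} [Fintype V] [Fintype W]
    (G : SimpleGraph V) (H : SimpleGraph W)
    (hGc : G.Connected) (hHc : H.Connected) (hG : G ≠ ⊤) (hH : H ≠ ⊤) :
    tollNumber (G □ H) = 2 := by
  classical
  obtain ⟨av, bv, hvne, _⟩ := TollAux.nontriv_of_ne_top hG
  obtain ⟨aw, bw, hwne, _⟩ := TollAux.nontriv_of_ne_top hH
  obtain ⟨g1, hood_G⟩ := TollAux.exists_nonconfining hGc hG
  obtain ⟨h2, hood_H⟩ := TollAux.exists_nonconfining hHc hH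
  have hx : ∃ x : V, x ≠ g1 := by
    by_cases h : av = g1
    · exact ⟨bv, fun hh => hvne (h.trans hh.symm)⟩
    · exact ⟨av, h⟩
  obtain ⟨x, hxg⟩ := hx
  obtain ⟨g2, _, hg12, hg2ne⟩ := hood_G x hxg
  have hy : ∃ y : W, y ≠ h2 := by
    by_cases h : aw = h2
    · exact ⟨bw, fun hh => hwne (h.trans hh.symm)⟩
    · exact ⟨aw, h⟩
  obtain ⟨y, hyh⟩ := hy
  obtain ⟨h1, _, hh21, hh1ne⟩ := hood_H y hyh
  have hts : IsTollSet (G □ H) {((g1, h1) : V × W), (g2, h2)} :=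
    TollAux.isTollSet_pair hGc hHc hg12 (Ne.symm hg2ne) (fun h => hh21 h.symm) hh1ne
      hood_G hood_H
  have hune : ((g1, h1) : V × W) ≠ (g2, h2) := fun h => hg2ne (congrArg Prod.fst h).symm
  have h2T : 2 ∈ {n | ∃ S : Set (V × W), S.Finite ∧ S.ncard = n ∧ IsTollSet (G □ H) S} :=
    ⟨{(g1, h1), (g2, h2)}, Set.toFinite _, Set.ncard_pair hune, hts⟩
  have hlb : ∀ n ∈ {n | ∃ S : Set (V × W), S.Finite ∧ S.ncard = n ∧ IsTollSet (G □ H) S},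
      2 ≤ n := by
    rintro n ⟨S, hfin, rfl, htoll⟩
    by_contra hlt
    push_neg at hlt
    have hcase : S.ncard = 0 ∨ S.ncard = 1 := by omega
    rcases hcase with hc0 | hc1
    · rw [Set.ncard_eq_zero hfin] at hc0
      obtain ⟨u', hu', _⟩ := htoll (g1, h1)
      rw [hc0] at hu'
      exact hu'
    · obtain ⟨s, rfl⟩ := Set.ncard_eq_one.mp hc1
      obtain ⟨u1, hu1, v1, hv1, hm1⟩ := htoll (g1, h1)
      obtain ⟨u2, hu2, v2, hv2, hm2⟩ := htoll (g2, h1)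
      rw [Set.mem_singleton_iff] at hu1 hv1 hu2 hv2
      subst hu1; subst hv1; subst hu2; subst hv2
      have e1 := TollAux.tollInterval_self _ _ _ hm1
      have e2 := TollAux.tollInterval_self _ _ _ hm2
      rw [← e2] at e1
      exact (Ne.symm hg2ne) (congrArg Prod.fst e1)
  show sInf {n | ∃ S : Set (V × W), S.Finite ∧ S.ncard = n ∧ IsTollSet (G □ H) S} = 2
  have hmem := Nat.sInf_mem (⟨2, h2T⟩ :
    {n | ∃ S : Set (V × W), S.Finite ∧ S.ncard = n ∧ IsTollSet (G □ H) S}.Nonempty)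
  have hge := hlb _ hmem
  have hle := Nat.sInf_le h2T
  omega
end

section
/- If G is a connected non-complete finite simple graph and m ≥ 2, then the toll number of the Cartesian product G □ K_m equals 2. -/
open SimpleGraph

private lemma tolled_of_decomp {V : Type*} {G : SimpleGraph V} {u v : V}
    (W : G.Walk u v) (hadj : ¬ G.Adj u v) (hne : u ≠ v)
    (a b : V) (M : List V)
    (hsup : W.support = u :: a :: (M ++ [b, v]))
    (hua : G.Adj u a) (hvb : G.Adj v b)
    (hva : ¬ G.Adj v a) (hub : ¬ G.Adj u b)
    (hM : ∀ z ∈ M, ¬ G.Adj u z ∧ ¬ G.Adj v z) :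
    IsTolledWalk G W := by
  have hlen : W.length = M.length + 3 := by
    have h := W.length_support
    rw [hsup] at h
    simp at h
    omega
  have hget : ∀ i, 0 < i → i < W.length →
      (i = 1 ∧ W.support.getD i u = a) ∨
      (1 < i ∧ i < M.length + 2 ∧ ∃ z ∈ M, W.support.getD i u = z) ∨
      (i = M.length + 2 ∧ W.support.getD i u = b) := by
    intro i h0 hi
    rw [hlen] at hi
    rw [hsup]
    obtain ⟨j, rfl⟩ : ∃ j, i = j + 1 := ⟨i - 1, by omega⟩
    rw [List.getD_cons_succ]
    rcases Nat.eq_zero_or_pos j with rfl | hj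
    · exact Or.inl ⟨rfl, List.getD_cons_zero⟩
    obtain ⟨k, rfl⟩ : ∃ k, j = k + 1 := ⟨j - 1, by omega⟩
    rw [List.getD_cons_succ]
    rcases lt_or_ge k M.length with hk | hk
    · refine Or.inr (Or.inl ⟨by omega, by omega, M.getD k u, ?_, ?_⟩)
      · rw [List.getD_eq_getElem _ _ hk]; exact List.getElem_mem _
      · exact List.getD_append _ _ _ _ hk
    · have hk2 : k = M.length := by omega
      subst hk2
      refine Or.inr (Or.inr ⟨rfl, ?_⟩)
      rw [List.getD_append_right _ _ _ _ (le_refl _)]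
      simp
  refine Or.inr (Or.inr ⟨hadj, hne, by omega, ?_, ?_⟩)
  · intro i h0 hi
    rcases hget i h0 hi with ⟨rfl, h⟩ | ⟨h1, h2, z, hz, h⟩ | ⟨rfl, h⟩
    · rw [h]; exact iff_of_true hua rfl
    · rw [h]; exact iff_of_false (hM z hz).1 (by omega)
    · rw [h]; exact iff_of_false hub (by omega)
  · intro i h0 hi
    rw [hlen]
    rcases hget i h0 hi with ⟨rfl, h⟩ | ⟨h1, h2, z, hz, h⟩ | ⟨rfl, h⟩
    · rw [h]; exact iff_of_false hva (by omega)
    · rw [h]; exact iff_of_false (hM z hz).2 (by omega)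
    · rw [h]; exact iff_of_true hvb (by omega)

private lemma tolled_short {V : Type*} {G : SimpleGraph V} {u v : V}
    (W : G.Walk u v) (hadj : ¬ G.Adj u v) (hne : u ≠ v) (a : V)
    (hsup : W.support = [u, a, v]) (hua : G.Adj u a) (hva : G.Adj v a) :
    IsTolledWalk G W := by
  have hlen : W.length = 2 := by
    have h := W.length_support
    rw [hsup] at h
    simp at h
    omega
  refine Or.inr (Or.inr ⟨hadj, hne, by omega, ?_, ?_⟩)
  · intro i h0 hi
    rw [hlen] at hi
    have hi1 : i = 1 := by omega
    subst hi1
    rw [hsup]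
    simp [hua]
  · intro i h0 hi
    rw [hlen] at hi ⊢
    have hi1 : i = 1 := by omega
    subst hi1
    rw [hsup]
    simp [hva]

private lemma tollInterval_self_eq {V : Type*} (G : SimpleGraph V) (w z : V)
    (h : z ∈ tollInterval G w w) : z = w := by
  obtain ⟨W, hW, hz⟩ := h
  rcases hW with ⟨-, hlen⟩ | ⟨hadj, -⟩ | ⟨-, hne, -⟩
  · cases W with
    | nil => simpa using hz
    | cons h p => simp at hlen
  · exact absurd hadj (G.irrefl)
  · exact absurd rfl hne

private def liftWalk {V : Type*} {G : SimpleGraph V} {m : ℕ} (c : Fin m) :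
    ∀ {a b : V}, G.Walk a b → (G □ (⊤ : SimpleGraph (Fin m))).Walk (a, c) (b, c)
  | _, _, Walk.nil => Walk.nil
  | _, _, @SimpleGraph.Walk.cons _ _ a' w' _ h p =>
      Walk.cons (show (G □ (⊤ : SimpleGraph (Fin m))).Adj (a', c) (w', c) from
        SimpleGraph.boxProd_adj.mpr (Or.inl ⟨h, rfl⟩)) (liftWalk c p)

private lemma liftWalk_support {V : Type*} {G : SimpleGraph V} {m : ℕ} (c : Fin m)
    {a b : V} (p : G.Walk a b) :
    (liftWalk c p).support = p.support.map (fun w => (w, c)) := by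
  induction p with
  | nil => simp [liftWalk]
  | cons h p ih => simp [liftWalk, ih]

private lemma path_decomp {V : Type*} {G : SimpleGraph V} {a b : V} (p : G.Walk a b)
    (hp : p.IsPath) (hab : a ≠ b) :
    ∃ T : List V, p.support = a :: (T ++ [b]) ∧ ∀ z ∈ T, z ≠ a ∧ z ≠ b ∧ z ∈ p.support := by
  have hcons := p.support_eq_cons
  have htne : p.support.tail ≠ [] := by
    intro h
    have hb := p.end_mem_support
    rw [hcons, h] at hb
    simp at hb
    exact hab hb.symm
  rcases List.eq_nil_or_concat p.support.tail with h | ⟨T, z, hTz⟩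
  · exact absurd h htne
  rw [List.concat_eq_append] at hTz
  have hsup : p.support = a :: (T ++ [z]) := by rw [hcons, hTz]
  have hzb : z = b := by
    have h2 : p.support.getLast? = some b := by
      rw [List.getLast?_eq_getLast (by rw [hcons]; simp), p.getLast_support]
    rw [hsup, show a :: (T ++ [z]) = (a :: T) ++ [z] by simp, List.getLast?_concat] at h2
    exact (Option.some_inj.mp h2)
  subst hzb
  have hnd := hp.support_nodup
  rw [hsup, List.nodup_cons, List.nodup_append] at hnd
  refine ⟨T, hsup, fun w hw => ⟨?_, ?_, ?_⟩⟩
  · intro h; exact hnd.1 (h ▸ (List.mem_append_left _ hw))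
  · intro h; exact hnd.2.2.2 w hw z (by simp) h
  · rw [hsup]; simp [hw]

private lemma exists_avoid {V : Type*} {G : SimpleGraph V} (hGc : G.Connected)
    {x y : V} (hxy : x ≠ y) (hnadj : ¬ G.Adj x y)
    (hmax : ∀ a b : V, a ≠ b → ¬ G.Adj a b → G.dist a b ≤ G.dist x y)
    {g : V} (hgx : g ≠ x) (hgy : g ≠ y) :
    ∃ p : G.Walk x g, p.IsPath ∧ y ∉ p.support := by
  classical
  have key : ∃ w : G.Walk x g, y ∉ w.support := by
    by_contra hcon
    push_neg at hcon
    obtain ⟨w, hw⟩ := hGc.exists_walk_length_eq_dist x g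
    have hy : y ∈ w.support := hcon w
    have hsplit := congrArg Walk.length (w.take_spec hy)
    rw [Walk.length_append] at hsplit
    have d1 : G.dist x y ≤ (w.takeUntil y hy).length := SimpleGraph.dist_le _
    have d2 : G.dist y g ≤ (w.dropUntil y hy).length := SimpleGraph.dist_le _
    have d3 : 0 < G.dist y g := hGc.pos_dist_of_ne (Ne.symm hgy)
    have hxg : ¬ G.Adj x g := by
      intro h
      have : y ∈ (Walk.cons h Walk.nil : G.Walk x g).support := hcon _
      simp only [Walk.support_cons, Walk.support_nil, List.mem_cons,
        List.not_mem_nil, or_false, List.mem_singleton] at this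
      rcases this with h1 | h1
      · exact hxy h1.symm
      · exact hgy h1.symm
    have d4 : G.dist x g ≤ G.dist x y := hmax x g (Ne.symm hgx) hxg
    omega
  obtain ⟨w, hw⟩ := key
  refine ⟨(w.toPath : G.Walk x g), (w.toPath).isPath, fun h => hw (w.support_toPath_subset h)⟩

theorem stmt3 {V : Type*} [Fintype V] (G : SimpleGraph V)
    (hGc : G.Connected) (hG : G ≠ ⊤) (m : ℕ) (hm : 2 ≤ m) :
    tollNumber (G □ (⊤ : SimpleGraph (Fin m))) = 2 := by
  classical
  have hpair : ∃ a b : V, a ≠ b ∧ ¬ G.Adj a b := by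
    by_contra h
    push_neg at h
    apply hG
    ext a b
    simp only [top_adj]
    exact ⟨fun h' => h'.ne, fun hne => h a b hne⟩
  obtain ⟨a0, b0, hab1, hab2⟩ := hpair
  obtain ⟨⟨x, y⟩, hmem, hmaxf⟩ := Finset.exists_max_image
      ((Finset.univ ×ˢ Finset.univ).filter fun p : V × V => p.1 ≠ p.2 ∧ ¬ G.Adj p.1 p.2)
      (fun p => G.dist p.1 p.2)
      ⟨(a0, b0), by simp [hab1, hab2]⟩
  simp only [Finset.mem_filter] at hmem
  obtain ⟨-, hxy, hnadj⟩ := hmem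
  have hmax : ∀ a b : V, a ≠ b → ¬ G.Adj a b → G.dist a b ≤ G.dist x y := by
    intro a b h1 h2
    exact hmaxf (a, b) (by simp [h1, h2])
  obtain ⟨z0, z1, hz10⟩ : ∃ z0 z1 : Fin m, z1 ≠ z0 :=
    ⟨⟨0, by omega⟩, ⟨1, by omega⟩, by simp [Fin.ext_iff]⟩
  set H := G □ (⊤ : SimpleGraph (Fin m)) with hH
  have hadj' : ∀ (w w' : V) (ℓ ℓ' : Fin m),
      H.Adj (w, ℓ) (w', ℓ') ↔ (G.Adj w w' ∧ ℓ = ℓ') ∨ (ℓ ≠ ℓ' ∧ w = w') := by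
    intro w w' ℓ ℓ'
    rw [hH, boxProd_adj]
    simp [top_adj]
  set u : V × Fin m := (x, z0) with hu
  set v : V × Fin m := (y, z0) with hv
  have hne : u ≠ v := by simp [hu, hv, Prod.ext_iff, hxy]
  have huv : ¬ H.Adj u v := by
    rw [hu, hv, hadj']
    rintro (⟨h, -⟩ | ⟨-, h⟩)
    · exact hnadj h
    · exact hxy h
  have adjUx : ∀ ℓ : Fin m, ℓ ≠ z0 → H.Adj u (x, ℓ) := fun ℓ hℓ =>
    (hadj' _ _ _ _).mpr (Or.inr ⟨Ne.symm hℓ, rfl⟩)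
  have adjVy : ∀ ℓ : Fin m, ℓ ≠ z0 → H.Adj v (y, ℓ) := fun ℓ hℓ =>
    (hadj' _ _ _ _).mpr (Or.inr ⟨Ne.symm hℓ, rfl⟩)
  have adjU0 : ∀ w : V, G.Adj x w → H.Adj u (w, z0) := fun w h =>
    (hadj' _ _ _ _).mpr (Or.inl ⟨h, rfl⟩)
  have adjV0 : ∀ w : V, G.Adj y w → H.Adj v (w, z0) := fun w h =>
    (hadj' _ _ _ _).mpr (Or.inl ⟨h, rfl⟩)
  have nadjU : ∀ (w : V) (ℓ : Fin m), w ≠ x → ℓ ≠ z0 → ¬ H.Adj u (w, ℓ) := by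
    intro w ℓ h1 h2 h
    rcases (hadj' _ _ _ _).mp h with ⟨-, h3⟩ | ⟨-, h3⟩
    · exact h2 h3.symm
    · exact h1 h3.symm
  have nadjV : ∀ (w : V) (ℓ : Fin m), w ≠ y → ℓ ≠ z0 → ¬ H.Adj v (w, ℓ) := by
    intro w ℓ h1 h2 h
    rcases (hadj' _ _ _ _).mp h with ⟨-, h3⟩ | ⟨-, h3⟩
    · exact h2 h3.symm
    · exact h1 h3.symm
  have nadjU0 : ∀ w : V, ¬ G.Adj x w → ¬ H.Adj u (w, z0) := by
    intro w h1 h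
    rcases (hadj' _ _ _ _).mp h with ⟨h3, -⟩ | ⟨h3, -⟩
    · exact h1 h3
    · exact h3 rfl
  have nadjV0 : ∀ w : V, ¬ G.Adj y w → ¬ H.Adj v (w, z0) := by
    intro w h1 h
    rcases (hadj' _ _ _ _).mp h with ⟨h3, -⟩ | ⟨h3, -⟩
    · exact h1 h3
    · exact h3 rfl
  obtain ⟨w0⟩ := hGc.preconnected x y
  obtain ⟨T0, hT0, hT0m⟩ := path_decomp (w0.toPath : G.Walk x y) (w0.toPath.isPath) hxy
  have tour : ∀ ℓ : Fin m, ℓ ≠ z0 → ∃ W : H.Walk u v, IsTolledWalk H W ∧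
      W.support = u :: (x, ℓ) :: (List.map (fun w => (w, ℓ)) T0 ++ [(y, ℓ), v]) := by
    intro ℓ hℓ
    have hs : (Walk.cons (adjUx ℓ hℓ)
        ((liftWalk ℓ (w0.toPath : G.Walk x y)).concat (adjVy ℓ hℓ).symm)).support
        = u :: (x, ℓ) :: (List.map (fun w => (w, ℓ)) T0 ++ [(y, ℓ), v]) := by
      simp [Walk.support_cons, Walk.support_concat, liftWalk_support, hT0]
    refine ⟨_, tolled_of_decomp _ huv hne (x, ℓ) (y, ℓ) _ hs (adjUx ℓ hℓ) (adjVy ℓ hℓ)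
      (nadjV x ℓ hxy hℓ) (nadjU y ℓ (Ne.symm hxy) hℓ) ?_, hs⟩
    intro z hz
    simp only [List.mem_map] at hz
    obtain ⟨w, hw, rfl⟩ := hz
    exact ⟨nadjU w ℓ (hT0m w hw).1 hℓ, nadjV w ℓ (hT0m w hw).2.1 hℓ⟩
  have hcover : ∀ z : V × Fin m, z ∈ tollInterval H u v := by
    rintro ⟨g, c⟩
    by_cases hgx : g = x
    · subst hgx
      by_cases hc : c = z0
      · rw [hc]
        obtain ⟨W, hW, hs⟩ := tour z1 hz10
        exact ⟨W, hW, by rw [hs]; simp [hu]⟩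
      · obtain ⟨W, hW, hs⟩ := tour c hc
        exact ⟨W, hW, by rw [hs]; simp⟩
    · by_cases hgy : g = y
      · subst hgy
        by_cases hc : c = z0
        · rw [hc]
          obtain ⟨W, hW, hs⟩ := tour z1 hz10
          exact ⟨W, hW, by rw [hs]; simp [hv]⟩
        · obtain ⟨W, hW, hs⟩ := tour c hc
          exact ⟨W, hW, by rw [hs]; simp⟩
      · obtain ⟨p1, hp1, hyp1⟩ := exists_avoid hGc hxy hnadj hmax hgx hgy
        have hmax' : ∀ a b : V, a ≠ b → ¬ G.Adj a b → G.dist a b ≤ G.dist y x := by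
          intro a b h1 h2
          rw [SimpleGraph.dist_comm (u := y)]
          exact hmax a b h1 h2
        obtain ⟨p2r, hp2r, hxp2r⟩ :=
          exists_avoid hGc (Ne.symm hxy) (fun h => hnadj h.symm) hmax' hgy hgx
        have hp2 : p2r.reverse.IsPath := hp2r.reverse
        have hxp2 : x ∉ p2r.reverse.support := by
          rw [Walk.support_reverse, List.mem_reverse]
          exact hxp2r
        obtain ⟨T1, hT1, hT1m⟩ := path_decomp p1 hp1 (Ne.symm hgx)
        obtain ⟨T2, hT2, hT2m⟩ := path_decomp p2r.reverse hp2 hgy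
        have hT1' : ∀ w ∈ T1, w ≠ x ∧ w ≠ y := fun w hw =>
          ⟨(hT1m w hw).1, fun h => hyp1 (h ▸ (hT1m w hw).2.2)⟩
        have hT2' : ∀ w ∈ T2, w ≠ x ∧ w ≠ y := fun w hw =>
          ⟨fun h => hxp2 (h ▸ (hT2m w hw).2.2), (hT2m w hw).2.1⟩
        by_cases hc : c = z0
        · rw [hc]
          by_cases hgxA : G.Adj g x
          · by_cases hgyA : G.Adj g y
            · -- case E
              refine ⟨Walk.cons (adjU0 g hgxA.symm) (Walk.cons (adjV0 g hgyA.symm).symm Walk.nil),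
                tolled_short _ huv hne (g, z0) ?_ (adjU0 g hgxA.symm) (adjV0 g hgyA.symm), ?_⟩
              · simp [Walk.support_cons, Walk.support_nil]
              · simp [Walk.support_cons, Walk.support_nil]
            · -- case F
              have hd : H.Adj (g, z0) (g, z1) := (hadj' _ _ _ _).mpr (Or.inr ⟨Ne.symm hz10, rfl⟩)
              have hs : (Walk.cons (adjU0 g hgxA.symm) (Walk.cons hd
                  ((liftWalk z1 p2r.reverse).concat (adjVy z1 hz10).symm))).support
                  = u :: (g, z0) :: (((g, z1) :: List.map (fun w => (w, z1)) T2) ++ [(y, z1), v]) := by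
                simp [Walk.support_cons, Walk.support_concat, liftWalk_support, hT2]
              refine ⟨_, tolled_of_decomp _ huv hne (g, z0) (y, z1) _ hs (adjU0 g hgxA.symm)
                (adjVy z1 hz10) (nadjV0 g (fun h => hgyA h.symm))
                (nadjU y z1 (Ne.symm hxy) hz10) ?_, by rw [hs]; simp⟩
              intro z hz
              simp only [List.mem_cons, List.mem_map] at hz
              rcases hz with rfl | ⟨w, hw, rfl⟩
              · exact ⟨nadjU g z1 hgx hz10, nadjV g z1 hgy hz10⟩
              · exact ⟨nadjU w z1 (hT2' w hw).1 hz10, nadjV w z1 (hT2' w hw).2 hz10⟩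
          · by_cases hgyA : G.Adj g y
            · -- case G
              have hd : H.Adj (g, z1) (g, z0) := (hadj' _ _ _ _).mpr (Or.inr ⟨hz10, rfl⟩)
              have hgv : H.Adj (g, z0) v := (adjV0 g hgyA.symm).symm
              have hs : (Walk.cons (adjUx z1 hz10)
                  (((liftWalk z1 p1).concat hd).concat hgv)).support
                  = u :: (x, z1) :: ((List.map (fun w => (w, z1)) T1 ++ [(g, z1)]) ++ [(g, z0), v]) := by
                simp [Walk.support_cons, Walk.support_concat, liftWalk_support, hT1]
              refine ⟨_, tolled_of_decomp _ huv hne (x, z1) (g, z0) _ hs (adjUx z1 hz10)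
                (adjV0 g hgyA.symm) (nadjV x z1 hxy hz10)
                (nadjU0 g (fun h => hgxA h.symm)) ?_, by rw [hs]; simp⟩
              intro z hz
              simp only [List.mem_append, List.mem_cons, List.mem_map, List.mem_singleton,
                List.not_mem_nil, or_false] at hz
              rcases hz with ⟨w, hw, rfl⟩ | rfl
              · exact ⟨nadjU w z1 (hT1' w hw).1 hz10, nadjV w z1 (hT1' w hw).2 hz10⟩
              · exact ⟨nadjU g z1 hgx hz10, nadjV g z1 hgy hz10⟩
            · -- case D
              have hd1 : H.Adj (g, z1) (g, z0) := (hadj' _ _ _ _).mpr (Or.inr ⟨hz10, rfl⟩)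
              have hd2 : H.Adj (g, z0) (g, z1) := (hadj' _ _ _ _).mpr (Or.inr ⟨Ne.symm hz10, rfl⟩)
              have hs : (Walk.cons (adjUx z1 hz10) (((liftWalk z1 p1).append
                  (Walk.cons hd1 (Walk.cons hd2 (liftWalk z1 p2r.reverse)))).concat
                  (adjVy z1 hz10).symm)).support
                  = u :: (x, z1) :: ((List.map (fun w => (w, z1)) T1 ++
                    (g, z1) :: (g, z0) :: (g, z1) :: List.map (fun w => (w, z1)) T2)
                    ++ [(y, z1), v]) := by
                simp [Walk.support_cons, Walk.support_concat, Walk.support_append,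
                  liftWalk_support, hT1, hT2]
              refine ⟨_, tolled_of_decomp _ huv hne (x, z1) (y, z1) _ hs (adjUx z1 hz10)
                (adjVy z1 hz10) (nadjV x z1 hxy hz10)
                (nadjU y z1 (Ne.symm hxy) hz10) ?_, by rw [hs]; simp⟩
              intro z hz
              simp only [List.mem_append, List.mem_cons, List.mem_map] at hz
              rcases hz with ⟨w, hw, rfl⟩ | rfl | rfl | rfl | ⟨w, hw, rfl⟩
              · exact ⟨nadjU w z1 (hT1' w hw).1 hz10, nadjV w z1 (hT1' w hw).2 hz10⟩
              · exact ⟨nadjU g z1 hgx hz10, nadjV g z1 hgy hz10⟩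
              · exact ⟨nadjU0 g (fun h => hgxA h.symm), nadjV0 g (fun h => hgyA h.symm)⟩
              · exact ⟨nadjU g z1 hgx hz10, nadjV g z1 hgy hz10⟩
              · exact ⟨nadjU w z1 (hT2' w hw).1 hz10, nadjV w z1 (hT2' w hw).2 hz10⟩
        · -- case C
          have hs : (Walk.cons (adjUx c hc) (((liftWalk c p1).append
              (liftWalk c p2r.reverse)).concat (adjVy c hc).symm)).support
              = u :: (x, c) :: ((List.map (fun w => (w, c)) T1 ++
                (g, c) :: List.map (fun w => (w, c)) T2) ++ [(y, c), v]) := by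
            simp [Walk.support_cons, Walk.support_concat, Walk.support_append,
              liftWalk_support, hT1, hT2]
          refine ⟨_, tolled_of_decomp _ huv hne (x, c) (y, c) _ hs (adjUx c hc) (adjVy c hc)
            (nadjV x c hxy hc) (nadjU y c (Ne.symm hxy) hc) ?_, by rw [hs]; simp⟩
          intro z hz
          simp only [List.mem_append, List.mem_cons, List.mem_map] at hz
          rcases hz with ⟨w, hw, rfl⟩ | rfl | ⟨w, hw, rfl⟩
          · exact ⟨nadjU w c (hT1' w hw).1 hc, nadjV w c (hT1' w hw).2 hc⟩
          · exact ⟨nadjU g c hgx hc, nadjV g c hgy hc⟩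
          · exact ⟨nadjU w c (hT2' w hw).1 hc, nadjV w c (hT2' w hw).2 hc⟩
  have hts : IsTollSet H {u, v} := fun z => ⟨u, by simp, v, by simp, hcover z⟩
  have h2mem : 2 ∈ {n | ∃ S : Set (V × Fin m), S.Finite ∧ S.ncard = n ∧ IsTollSet H S} :=
    ⟨{u, v}, Set.toFinite _, Set.ncard_pair hne, hts⟩
  have hbound : ∀ n ∈ {n | ∃ S : Set (V × Fin m), S.Finite ∧ S.ncard = n ∧ IsTollSet H S},
      2 ≤ n := by
    rintro n ⟨S, hfin, rfl, hS⟩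
    by_contra hlt
    push_neg at hlt
    have h01 : S.ncard = 0 ∨ S.ncard = 1 := by omega
    rcases h01 with h0 | h1
    · have hSe : S = ∅ := (Set.ncard_eq_zero hfin).mp h0
      obtain ⟨w, hw, -⟩ := hS u
      rw [hSe] at hw
      exact hw
    · obtain ⟨w, rfl⟩ := Set.ncard_eq_one.mp h1
      obtain ⟨a, ha, b, hb, hz⟩ := hS u
      obtain ⟨a', ha', b', hb', hz'⟩ := hS v
      rw [Set.mem_singleton_iff] at ha hb ha' hb'
      subst ha; subst hb; subst ha'; subst hb'
      have e1 := tollInterval_self_eq H _ _ hz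
      have e2 := tollInterval_self_eq H _ _ hz'
      apply hxy
      have huveq : u = v := e1.trans e2.symm
      rw [hu, hv] at huveq
      exact congrArg Prod.fst huveq
  unfold tollNumber
  exact le_antisymm (Nat.sInf_le h2mem) (hbound _ (Nat.sInf_mem ⟨2, h2mem⟩))
end

section
/- Let G and H be non-trivial graphs where H is not isomorphic to K_2 and not complete. Then tn(G ∘ H) = 2 if and only if G has a universal vertex and tn(H) = 2. -/
open SimpleGraph

section Prelim
variable {V : Type*} {G : SimpleGraph V}

lemma support_getD_eq_getVert {u v : V} (p : G.Walk u v) (d : V) :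
    ∀ i, i ≤ p.length → p.support.getD i d = p.getVert i := by
  induction p with
  | nil => intro i hi; simp only [Nat.le_zero, Walk.length_nil] at hi; subst hi; simp [Walk.getVert]
  | cons h q ih =>
    intro i hi
    cases i with
    | zero => simp [Walk.getVert]
    | succ n =>
      simp only [Walk.support_cons, List.getD_cons_succ, Walk.getVert_cons_succ]
      exact ih n (by simpa [Walk.length_cons, Nat.succ_le_succ_iff] using hi)

lemma support_eq_pair_iff {u v : V} (p : G.Walk u v) :
    p.support = [u, v] ↔ p.length = 1 := by
  constructor
  · intro h
    have := p.length_support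
    rw [h] at this
    simpa using this.symm
  · intro h
    cases p with
    | nil => simp at h
    | cons hadj q =>
      simp only [Walk.length_cons, Nat.succ_inj] at h
      have : q.Nil := Walk.nil_iff_length_eq.2 h
      cases q with
      | nil => simp
      | cons h q => simp at this
end Prelim

section Toll
variable {V : Type*} {G : SimpleGraph V}

lemma isTolledWalk_iff {u v : V} (p : G.Walk u v) :
    IsTolledWalk G p ↔
      (u = v ∧ p.length = 0) ∨
      (G.Adj u v ∧ p.length = 1) ∨
      (¬ G.Adj u v ∧ u ≠ v ∧ 2 ≤ p.length ∧
        (∀ i, 0 < i → i < p.length → (G.Adj u (p.getVert i) ↔ i = 1)) ∧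
        (∀ i, 0 < i → i < p.length → (G.Adj v (p.getVert i) ↔ i = p.length - 1))) := by
  unfold IsTolledWalk
  rw [support_eq_pair_iff]
  constructor <;> rintro (h | h | ⟨h1, h2, h3, h4, h5⟩)
  · exact Or.inl h
  · exact Or.inr (Or.inl h)
  · refine Or.inr (Or.inr ⟨h1, h2, h3, fun i hi hi' => ?_, fun i hi hi' => ?_⟩)
    · rw [← support_getD_eq_getVert p u i hi'.le]; exact h4 i hi hi'
    · rw [← support_getD_eq_getVert p u i hi'.le]; exact h5 i hi hi'
  · exact Or.inl h
  · exact Or.inr (Or.inl h)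
  · refine Or.inr (Or.inr ⟨h1, h2, h3, fun i hi hi' => ?_, fun i hi hi' => ?_⟩)
    · rw [support_getD_eq_getVert p u i hi'.le]; exact h4 i hi hi'
    · rw [support_getD_eq_getVert p u i hi'.le]; exact h5 i hi hi'

lemma tollInterval_self (a : V) : tollInterval G a a = {a} := by
  ext x
  simp only [tollInterval, Set.mem_setOf_eq, Set.mem_singleton_iff]
  constructor
  · rintro ⟨p, hp, hx⟩
    rcases (isTolledWalk_iff p).1 hp with ⟨-, h0⟩ | ⟨h, -⟩ | ⟨-, h, -⟩
    · have : p.Nil := Walk.nil_iff_length_eq.2 h0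
      cases p with
      | nil => simpa using hx
      | cons h q => simp at this
    · exact absurd h (G.irrefl)
    · exact absurd rfl h
  · rintro rfl
    exact ⟨Walk.nil, Or.inl ⟨rfl, rfl⟩, by simp⟩

lemma tollInterval_subset_of_adj {a b : V} (hab : G.Adj a b) :
    tollInterval G a b ⊆ {a, b} := by
  rintro x ⟨p, hp, hx⟩
  rcases (isTolledWalk_iff p).1 hp with ⟨h, -⟩ | ⟨-, h1⟩ | ⟨h, -⟩
  · exact absurd h hab.ne
  · have hsupp : p.support = [a, b] := (support_eq_pair_iff p).2 h1
    rw [hsupp] at hx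
    simpa using hx
  · exact absurd hab h

lemma isTollSet_univ : IsTollSet G (Set.univ : Set V) := by
  intro x
  exact ⟨x, trivial, x, trivial, by rw [tollInterval_self]; rfl⟩

lemma tollNumber_eq_two_iff [Fintype V] [Nontrivial V] :
    tollNumber G = 2 ↔ ∃ a b : V, a ≠ b ∧ IsTollSet G {a, b} := by
  have hne : {n | ∃ S : Set V, S.Finite ∧ S.ncard = n ∧ IsTollSet G S}.Nonempty :=
    ⟨(Set.univ : Set V).ncard, Set.univ, Set.finite_univ, rfl, isTollSet_univ⟩
  have h0 : 0 ∉ {n | ∃ S : Set V, S.Finite ∧ S.ncard = n ∧ IsTollSet G S} := by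
    rintro ⟨S, hSf, hS0, hTS⟩
    rw [Set.ncard_eq_zero hSf] at hS0
    subst hS0
    obtain ⟨u, hu, -⟩ := hTS (Classical.arbitrary V)
    exact hu
  have h1 : 1 ∉ {n | ∃ S : Set V, S.Finite ∧ S.ncard = n ∧ IsTollSet G S} := by
    rintro ⟨S, hSf, hS1, hTS⟩
    rw [Set.ncard_eq_one] at hS1
    obtain ⟨a, rfl⟩ := hS1
    obtain ⟨x, hx⟩ := exists_ne a
    obtain ⟨u, hu, w, hw, hmem⟩ := hTS x
    rw [Set.mem_singleton_iff] at hu hw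
    subst hu; subst hw
    rw [tollInterval_self] at hmem
    exact hx hmem
  have h2iff : (2 ∈ {n | ∃ S : Set V, S.Finite ∧ S.ncard = n ∧ IsTollSet G S}) ↔
      ∃ a b : V, a ≠ b ∧ IsTollSet G {a, b} := by
    constructor
    · rintro ⟨S, hSf, hS2, hTS⟩
      obtain ⟨a, b, hab, rfl⟩ := Set.ncard_eq_two.1 hS2
      exact ⟨a, b, hab, hTS⟩
    · rintro ⟨a, b, hab, hTS⟩
      exact ⟨{a, b}, Set.toFinite _, Set.ncard_pair hab, hTS⟩
  constructor
  · intro h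
    have := Nat.sInf_mem hne
    rw [tollNumber] at h
    rw [h] at this
    exact h2iff.1 this
  · intro h
    have hle : tollNumber G ≤ 2 := Nat.sInf_le (h2iff.2 h)
    have hmem := Nat.sInf_mem hne
    rcases Nat.lt_or_ge (tollNumber G) 2 with hlt | hge
    · interval_cases h' : (tollNumber G)
      · exact absurd (h' ▸ hmem) h0
      · exact absurd (h' ▸ hmem) h1
    · omega
end Toll
section Lex
variable {V W : Type*} {G : SimpleGraph V} {H : SimpleGraph W}

lemma getVert_map {V' : Type*} {G' : SimpleGraph V'} (f : G →g G') {u v : V}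
    (p : G.Walk u v) : ∀ i, (p.map f).getVert i = f (p.getVert i) := by
  induction p with
  | nil => intro i; simp [Walk.getVert]
  | cons h q ih =>
    intro i
    cases i with
    | zero => simp [Walk.getVert]
    | succ n => simpa [Walk.getVert_cons_succ] using ih n

lemma lexProd_adj {a b : V × W} :
    (lexProd G H).Adj a b ↔ G.Adj a.1 b.1 ∨ (a.1 = b.1 ∧ H.Adj a.2 b.2) := Iff.rfl

lemma lexProd_adj_same {g : V} {a b : W} :
    (lexProd G H).Adj (g, a) (g, b) ↔ H.Adj a b := by
  simp [lexProd_adj]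

/-- The embedding of `H` in the copy over `g`. -/
def copyHom (G : SimpleGraph V) (H : SimpleGraph W) (g : V) : H →g lexProd G H where
  toFun h := (g, h)
  map_rel' := fun hab => Or.inr ⟨rfl, hab⟩

lemma isTolledWalk_map (g : V) {p q : W} (T : H.Walk p q) (hT : IsTolledWalk H T) :
    IsTolledWalk (lexProd G H) (T.map (copyHom G H g)) := by
  rw [isTolledWalk_iff] at hT ⊢
  have hlen : (T.map (copyHom G H g)).length = T.length := Walk.length_map _ _
  rcases hT with ⟨h1, h2⟩ | ⟨h1, h2⟩ | ⟨h1, h2, h3, h4, h5⟩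
  · exact Or.inl ⟨by simp [copyHom, h1], by simp [hlen, h2]⟩
  · exact Or.inr (Or.inl ⟨lexProd_adj_same.2 h1, by simp [hlen, h2]⟩)
  · have e : ∀ h : W, (copyHom G H g) h = (g, h) := fun _ => rfl
    refine Or.inr (Or.inr ⟨by rw [e, e, lexProd_adj_same]; exact h1,
      by rw [e, e]; simp only [ne_eq, Prod.mk.injEq, not_and]; exact fun _ => h2, by omega, ?_, ?_⟩)
    · intro i hi hi'
      rw [hlen] at hi'
      rw [getVert_map]
      have : (copyHom G H g) (T.getVert i) = (g, T.getVert i) := rfl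
      rw [this]
      show (lexProd G H).Adj (g, p) _ ↔ _
      rw [lexProd_adj_same]
      exact h4 i hi hi'
    · intro i hi hi'
      rw [hlen] at hi' ⊢
      rw [getVert_map]
      have : (copyHom G H g) (T.getVert i) = (g, T.getVert i) := rfl
      rw [this]
      show (lexProd G H).Adj (g, q) _ ↔ _
      rw [lexProd_adj_same]
      exact h5 i hi hi'
end Lex
section Structure
variable {V W : Type*} {G : SimpleGraph V} {H : SimpleGraph W}

/-- In a (case-3) tolled walk between copies over non-adjacent distinct `a1 ≠ a2`,
the first coordinate `a1` occurs only at position 0. -/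
lemma first_coord_only_at_zero {a1 a2 : V} {b1 b2 : W}
    (hne : a1 ≠ a2) (hadj : ¬ G.Adj a1 a2)
    (T : (lexProd G H).Walk (a1, b1) (a2, b2))
    (h4 : ∀ i, 0 < i → i < T.length →
      ((lexProd G H).Adj (a1, b1) (T.getVert i) ↔ i = 1)) :
    ∀ n, n ≤ T.length → (T.getVert n).1 = a1 → n = 0 := by
  intro n hn h
  by_contra hn0
  have key : ∀ d, n + d ≤ T.length → (T.getVert (n + d)).1 = a1 := by
    intro d
    induction d with
    | zero => intro _; simpa using h
    | succ k ih =>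
      intro hd
      have hk : (T.getVert (n + k)).1 = a1 := ih (by omega)
      by_contra hx
      have hadj' := T.adj_getVert_succ (show n + k < T.length by omega)
      have hG : G.Adj a1 (T.getVert (n + k + 1)).1 := by
        rcases hadj' with hG | ⟨heq, -⟩
        · rwa [hk] at hG
        · rw [hk] at heq; exact absurd (hx (by rw [show n + (k + 1) = n + k + 1 by omega]; exact heq.symm)) id
      rcases Nat.lt_or_ge (n + k + 1) T.length with hlt | hge
      · have := (h4 (n + k + 1) (by omega) hlt).1 (Or.inl hG)
        omega
      · have hlen : n + k + 1 = T.length := by omega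
        rw [hlen, T.getVert_length] at hG
        exact hadj hG
  have := key (T.length - n) (by omega)
  rw [show n + (T.length - n) = T.length by omega, T.getVert_length] at this
  simp only at this
  exact hne this.symm

/-- Dually, the coordinate `a2` occurs only at the final position. -/
lemma last_coord_only_at_length {a1 a2 : V} {b1 b2 : W}
    (hne : a1 ≠ a2) (hadj : ¬ G.Adj a1 a2)
    (T : (lexProd G H).Walk (a1, b1) (a2, b2))
    (h5 : ∀ i, 0 < i → i < T.length →
      ((lexProd G H).Adj (a2, b2) (T.getVert i) ↔ i = T.length - 1)) :
    ∀ n, n ≤ T.length → (T.getVert n).1 = a2 → n = T.length := by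
  intro n
  induction n using Nat.strong_induction_on with
  | _ n ih =>
  intro hn h
  by_contra hnlen
  have hnlt : n < T.length := by omega
  cases n with
  | zero =>
    rw [T.getVert_zero] at h
    exact hne h
  | succ k =>
    by_cases hk : (T.getVert k).1 = a2
    · have := ih k (by omega) (by omega) hk
      omega
    · have hadj' := T.adj_getVert_succ (show k < T.length by omega)
      have hG : G.Adj (T.getVert k).1 a2 := by
        rcases hadj' with hG | ⟨heq, -⟩
        · rwa [h] at hG
        · rw [h] at heq; exact absurd heq hk
      cases Nat.eq_zero_or_pos k with
      | inl hk0 =>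
        rw [hk0, T.getVert_zero] at hG
        exact hadj hG
      | inr hkpos =>
        have := (h5 k hkpos (by omega)).1 (Or.inl hG.symm)
        omega

/-- In a (case-3) tolled walk within a copy `{g} × W` of length `≠ 2`,
every vertex stays in the copy. -/
lemma confined_in_copy {g : V} {b1 b2 : W}
    (T : (lexProd G H).Walk (g, b1) (g, b2)) (hlen : 2 ≤ T.length) (hl2 : T.length ≠ 2)
    (h4 : ∀ i, 0 < i → i < T.length →
      ((lexProd G H).Adj (g, b1) (T.getVert i) ↔ i = 1))
    (h5 : ∀ i, 0 < i → i < T.length →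
      ((lexProd G H).Adj (g, b2) (T.getVert i) ↔ i = T.length - 1)) :
    ∀ n, n ≤ T.length → (T.getVert n).1 = g := by
  intro n
  induction n with
  | zero => intro _; simp
  | succ k ih =>
    intro hk
    have hkg : (T.getVert k).1 = g := ih (by omega)
    by_contra hx
    have hadj' := T.adj_getVert_succ (show k < T.length by omega)
    have hG : G.Adj g (T.getVert (k + 1)).1 := by
      rcases hadj' with hG | ⟨heq, -⟩
      · rwa [hkg] at hG
      · rw [hkg] at heq; exact absurd heq.symm (by simpa [Ne, eq_comm] using hx)
    rcases Nat.lt_or_ge (k + 1) T.length with hlt | hge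
    · have e1 := (h4 (k + 1) (by omega) hlt).1 (Or.inl hG)
      have e2 := (h5 (k + 1) (by omega) hlt).1 (Or.inl hG)
      omega
    · have heq : k + 1 = T.length := by omega
      rw [heq, T.getVert_length] at hx
      exact hx rfl

/-- A walk confined to the copy `{g} × W` projects to a walk in `H`. -/
lemma exists_proj_walk {g : V} :
    ∀ {a b : V × W} (T : (lexProd G H).Walk a b), (∀ x ∈ T.support, x.1 = g) →
      ∃ T' : H.Walk a.2 b.2, T'.length = T.length ∧ ∀ i, T.getVert i = (g, T'.getVert i) := by
  intro a b T
  induction T with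
  | @nil u =>
    intro hsupp
    refine ⟨Walk.nil, rfl, fun i => ?_⟩
    have ha : u.1 = g := hsupp u (by simp)
    show u = (g, u.2)
    rw [← ha]
  | @cons u x b hadj q ih =>
    intro hsupp
    have hu : u.1 = g := hsupp u (by simp)
    have hx : x.1 = g := hsupp x (by simp)
    have hH : H.Adj u.2 x.2 := by
      rcases hadj with hG | ⟨-, hH⟩
      · rw [hu, hx] at hG; exact absurd hG (G.irrefl)
      · exact hH
    obtain ⟨q', hq1, hq2⟩ := ih (fun y hy => hsupp y (by simp [hy]))
    refine ⟨Walk.cons hH q', by simp [hq1], fun i => ?_⟩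
    cases i with
    | zero =>
      show u = (g, u.2)
      rw [← hu]
    | succ n => simpa [Walk.getVert_cons_succ] using hq2 n
end Structure
section KeyLemma
variable {V W : Type*} {G : SimpleGraph V} {H : SimpleGraph W}

lemma not_lexProd_adj_same {g : V} {p q : W} (h : ¬ H.Adj p q) :
    ¬ (lexProd G H).Adj (g, p) (g, q) := fun hc => h (lexProd_adj_same.1 hc)

lemma mem_tollInterval_lexProd {g : V} {p q : W} (hpq : p ≠ q) (hadj : ¬ H.Adj p q)
    {x : V × W} (hx : x ∈ tollInterval (lexProd G H) (g, p) (g, q)) :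
    (x.1 ≠ g → G.Adj g x.1) ∧
    (x.1 = g → x.2 = p ∨ x.2 = q ∨ x.2 ∈ tollInterval H p q) := by
  obtain ⟨T, hT, hmem⟩ := hx
  rw [isTolledWalk_iff] at hT
  rcases hT with ⟨h1, -⟩ | ⟨h1, -⟩ | ⟨-, -, hlen, h4, h5⟩
  · exact absurd (congrArg Prod.snd h1) hpq
  · exact absurd h1 (not_lexProd_adj_same hadj)
  by_cases hl2 : T.length = 2
  · obtain ⟨n, hget, hn⟩ := Walk.mem_support_iff_exists_getVert.1 hmem
    rw [hl2] at hn
    interval_cases n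
    · rw [T.getVert_zero] at hget
      subst hget
      exact ⟨fun h => absurd rfl h, fun _ => Or.inl rfl⟩
    swap
    · rw [show (2:ℕ) = T.length from hl2.symm, T.getVert_length] at hget
      subst hget
      exact ⟨fun h => absurd rfl h, fun _ => Or.inr (Or.inl rfl)⟩
    · have e1 : (lexProd G H).Adj (g, p) x := by
        have := T.adj_getVert_succ (show 0 < T.length by omega)
        rwa [T.getVert_zero, show (0 : ℕ) + 1 = 1 from rfl, hget] at this
      have e2 : (lexProd G H).Adj x (g, q) := by
        have := T.adj_getVert_succ (show 1 < T.length by omega)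
        rwa [hget, show (1 : ℕ) + 1 = T.length by omega, T.getVert_length] at this
      constructor
      · intro hxg
        rcases e1 with hG | ⟨heq, -⟩
        · exact hG
        · exact absurd heq.symm hxg
      · intro hxg
        have hpx : H.Adj p x.2 := by
          rcases e1 with hG | ⟨-, hH⟩
          · rw [hxg] at hG; exact absurd hG (G.irrefl)
          · exact hH
        have hxq : H.Adj x.2 q := by
          rcases e2 with hG | ⟨-, hH⟩
          · rw [hxg] at hG; exact absurd hG (G.irrefl)
          · exact hH
        refine Or.inr (Or.inr ⟨Walk.cons hpx (Walk.cons hxq Walk.nil), ?_, by simp⟩)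
        rw [isTolledWalk_iff]
        refine Or.inr (Or.inr ⟨hadj, hpq, by simp, ?_, ?_⟩)
        · intro i hi hi'
          simp only [Walk.length_cons, Walk.length_nil] at hi'
          have : i = 1 := by omega
          subst this
          simp only [Walk.getVert_cons_succ, Walk.getVert_zero]
          exact iff_of_true hpx (by trivial)
        · intro i hi hi'
          simp only [Walk.length_cons, Walk.length_nil] at hi' ⊢
          have : i = 1 := by omega
          subst this
          simp only [Walk.getVert_cons_succ, Walk.getVert_zero]
          exact iff_of_true hxq.symm (by trivial)
  · have hconf : ∀ n ≤ T.length, (T.getVert n).1 = g := confined_in_copy T hlen hl2 h4 h5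
    have hsupp : ∀ y ∈ T.support, y.1 = g := by
      intro y hy
      obtain ⟨n, hget, hn⟩ := Walk.mem_support_iff_exists_getVert.1 hy
      rw [← hget]
      exact hconf n hn
    refine ⟨fun h => absurd (hsupp x hmem) h, fun _ => ?_⟩
    obtain ⟨T', hTlen, hTvert⟩ := exists_proj_walk T hsupp
    obtain ⟨n, hget, hn⟩ := Walk.mem_support_iff_exists_getVert.1 hmem
    refine Or.inr (Or.inr ⟨T', ?_, ?_⟩)
    · rw [isTolledWalk_iff]
      refine Or.inr (Or.inr ⟨hadj, hpq, by omega, ?_, ?_⟩)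
      · intro i hi hi'
        rw [hTlen] at hi'
        have := h4 i hi hi'
        rw [hTvert i, lexProd_adj_same] at this
        exact this
      · intro i hi hi'
        rw [hTlen] at hi'
        have := h5 i hi hi'
        rw [hTvert i, lexProd_adj_same, ← hTlen] at this
        exact this
    · rw [Walk.mem_support_iff_exists_getVert]
      refine ⟨n, ?_, by omega⟩
      have := hTvert n
      rw [hget] at this
      exact (congrArg Prod.snd this).symm
end KeyLemma
theorem stmt13 {V W : Type*} [Fintype V] [Fintype W] [Nontrivial V] [Nontrivial W]
    (G : SimpleGraph V) (H : SimpleGraph W)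
    (hHK2 : ¬ Nonempty (H ≃g (⊤ : SimpleGraph (Fin 2)))) (hH : H ≠ ⊤) :
    tollNumber (lexProd G H) = 2 ↔
      (∃ g : V, ∀ w : V, w ≠ g → G.Adj g w) ∧ tollNumber H = 2 := by
  have hcard : 4 ≤ Fintype.card (V × W) := by
    rw [Fintype.card_prod]
    have h1 := Fintype.one_lt_card (α := V)
    have h2 := Fintype.one_lt_card (α := W)
    nlinarith
  constructor
  · intro h
    obtain ⟨u, v, huv, hTS⟩ := (tollNumber_eq_two_iff (G := lexProd G H)).1 h
    have hnadj : ¬ (lexProd G H).Adj u v := by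
      intro hadj
      have hsub : (Set.univ : Set (V × W)) ⊆ {u, v} := by
        intro x _
        obtain ⟨a, ha, b, hb, hx⟩ := hTS x
        simp only [Set.mem_insert_iff, Set.mem_singleton_iff] at ha hb
        simp only [Set.mem_insert_iff, Set.mem_singleton_iff]
        rcases ha with rfl | rfl <;> rcases hb with rfl | rfl
        · rw [tollInterval_self, Set.mem_singleton_iff] at hx; exact Or.inl hx
        · simpa using tollInterval_subset_of_adj hadj hx
        · have h3 := tollInterval_subset_of_adj hadj.symm hx
          simp only [Set.mem_insert_iff, Set.mem_singleton_iff] at h3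
          exact h3.symm
        · rw [tollInterval_self, Set.mem_singleton_iff] at hx; exact Or.inr hx
      have hle : Fintype.card (V × W) ≤ 2 := by
        calc Fintype.card (V × W) = (Set.univ : Set (V × W)).ncard := by
              rw [Set.ncard_univ, Nat.card_eq_fintype_card]
          _ ≤ ({u, v} : Set (V × W)).ncard := Set.ncard_le_ncard hsub (Set.toFinite _)
          _ ≤ 2 := (Set.ncard_insert_le _ _).trans (by simp)
      omega
    obtain ⟨g1, b1⟩ := u
    obtain ⟨g2, b2⟩ := v
    by_cases hg : g1 = g2
    · subst hg
      have hb : b1 ≠ b2 := fun hbe => huv (by rw [hbe])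
      have hHadj : ¬ H.Adj b1 b2 := fun hh => hnadj (Or.inr ⟨rfl, hh⟩)
      have key : ∀ x : V × W, (x.1 ≠ g1 → G.Adj g1 x.1) ∧
          (x.1 = g1 → x.2 = b1 ∨ x.2 = b2 ∨
            x.2 ∈ tollInterval H b1 b2 ∨ x.2 ∈ tollInterval H b2 b1) := by
        intro x
        obtain ⟨a, ha, b, hb', hx⟩ := hTS x
        simp only [Set.mem_insert_iff, Set.mem_singleton_iff] at ha hb'
        rcases ha with rfl | rfl <;> rcases hb' with rfl | rfl
        · rw [tollInterval_self] at hx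
          rw [hx]
          exact ⟨fun hc => absurd rfl hc, fun _ => Or.inl rfl⟩
        · obtain ⟨c1, c2⟩ := mem_tollInterval_lexProd hb hHadj hx
          exact ⟨c1, fun hxg => ((c2 hxg).imp id (Or.imp id (fun h' => Or.inl h')))⟩
        · obtain ⟨c1, c2⟩ := mem_tollInterval_lexProd (Ne.symm hb)
            (fun hh => hHadj hh.symm) hx
          exact ⟨c1, fun hxg => by
            rcases c2 hxg with h' | h' | h'
            · exact Or.inr (Or.inl h')
            · exact Or.inl h'
            · exact Or.inr (Or.inr (Or.inr h'))⟩
        · rw [tollInterval_self] at hx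
          rw [hx]
          exact ⟨fun hc => absurd rfl hc, fun _ => Or.inr (Or.inl rfl)⟩
      refine ⟨⟨g1, fun a hag => ?_⟩, ?_⟩
      · exact (key (a, b1)).1 hag
      · rw [tollNumber_eq_two_iff]
        refine ⟨b1, b2, hb, fun w => ?_⟩
        rcases (key (g1, w)).2 rfl with h' | h' | h' | h'
        · exact ⟨b1, by simp, b1, by simp, by rw [tollInterval_self]; exact h'⟩
        · exact ⟨b2, by simp, b2, by simp, by rw [tollInterval_self]; exact h'⟩
        · exact ⟨b1, by simp, b2, by simp, h'⟩
        · exact ⟨b2, by simp, b1, by simp, h'⟩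
    · exfalso
      have hGadj : ¬ G.Adj g1 g2 := fun hh => hnadj (Or.inl hh)
      obtain ⟨w, hw⟩ := exists_ne b1
      obtain ⟨a, ha, b, hb', hx⟩ := hTS (g1, w)
      simp only [Set.mem_insert_iff, Set.mem_singleton_iff] at ha hb'
      rcases ha with rfl | rfl <;> rcases hb' with rfl | rfl
      · rw [tollInterval_self, Set.mem_singleton_iff] at hx
        exact hw (congrArg Prod.snd hx)
      · obtain ⟨T, hT, hmem⟩ := hx
        rw [isTolledWalk_iff] at hT
        rcases hT with ⟨h1, -⟩ | ⟨h1, -⟩ | ⟨-, -, hlen, h4, h5⟩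
        · exact hg (congrArg Prod.fst h1)
        · exact hnadj h1
        obtain ⟨n, hget, hn⟩ := Walk.mem_support_iff_exists_getVert.1 hmem
        have hn0 := first_coord_only_at_zero hg hGadj T h4 n hn (by rw [hget])
        rw [hn0, T.getVert_zero] at hget
        exact hw (congrArg Prod.snd hget).symm
      · obtain ⟨T, hT, hmem⟩ := hx
        rw [isTolledWalk_iff] at hT
        rcases hT with ⟨h1, -⟩ | ⟨h1, -⟩ | ⟨-, -, hlen, h4, h5⟩
        · exact hg (congrArg Prod.fst h1).symm
        · exact hnadj h1.symm
        obtain ⟨n, hget, hn⟩ := Walk.mem_support_iff_exists_getVert.1 hmem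
        have hn0 := last_coord_only_at_length (Ne.symm hg) (fun hh => hGadj hh.symm)
          T h5 n hn (by rw [hget])
        rw [hn0, T.getVert_length] at hget
        exact hw (congrArg Prod.snd hget).symm
      · rw [tollInterval_self, Set.mem_singleton_iff] at hx
        exact hg (congrArg Prod.fst hx)
  · rintro ⟨⟨g, hg⟩, htn⟩
    obtain ⟨h1, h2, h12, hTS⟩ := (tollNumber_eq_two_iff (G := H)).1 htn
    have hHadj : ¬ H.Adj h1 h2 := by
      intro hadj
      apply hH
      have hsub : ∀ w : W, w = h1 ∨ w = h2 := by
        intro w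
        obtain ⟨a, ha, b, hb, hx⟩ := hTS w
        simp only [Set.mem_insert_iff, Set.mem_singleton_iff] at ha hb
        rcases ha with rfl | rfl <;> rcases hb with rfl | rfl
        · rw [tollInterval_self] at hx; exact Or.inl hx
        · have := tollInterval_subset_of_adj hadj hx; simpa using this
        · have := tollInterval_subset_of_adj hadj.symm hx
          rcases this with h' | h'
          · exact Or.inr h'
          · exact Or.inl h'
        · rw [tollInterval_self] at hx; exact Or.inr hx
      ext a b
      simp only [top_adj]
      constructor
      · exact fun h' => h'.ne
      · intro hab
        rcases hsub a with rfl | rfl <;> rcases hsub b with rfl | rfl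
        · exact absurd rfl hab
        · exact hadj
        · exact hadj.symm
        · exact absurd rfl hab
    rw [tollNumber_eq_two_iff]
    refine ⟨(g, h1), (g, h2), by simp [h12], ?_⟩
    rintro ⟨a, w⟩
    by_cases hag : a = g
    · subst hag
      obtain ⟨p, hp, q, hq, hw⟩ := hTS w
      obtain ⟨T, hT, hmem⟩ := hw
      refine ⟨(a, p), ?_, (a, q), ?_, T.map (copyHom G H a), isTolledWalk_map a T hT, ?_⟩
      · simp only [Set.mem_insert_iff, Set.mem_singleton_iff] at hp
        rcases hp with rfl | rfl <;> simp
      · simp only [Set.mem_insert_iff, Set.mem_singleton_iff] at hq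
        rcases hq with rfl | rfl <;> simp
      · exact (by rw [Walk.support_map]; exact List.mem_map.2 ⟨w, hmem, rfl⟩ :
          (a, w) ∈ (T.map (copyHom G H a)).support)
    · have hGa : G.Adj g a := hg a hag
      refine ⟨(g, h1), by simp, (g, h2), by simp, ?_⟩
      refine ⟨Walk.cons (show (lexProd G H).Adj (g, h1) (a, w) from Or.inl hGa)
        (Walk.cons (show (lexProd G H).Adj (a, w) (g, h2) from Or.inl hGa.symm) Walk.nil),
        ?_, by simp⟩
      rw [isTolledWalk_iff]
      refine Or.inr (Or.inr ⟨not_lexProd_adj_same hHadj, by simp [h12], by simp, ?_, ?_⟩)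
      · intro i hi hi'
        simp only [Walk.length_cons, Walk.length_nil] at hi'
        have : i = 1 := by omega
        subst this
        simp only [Walk.getVert_cons_succ, Walk.getVert_zero]
        exact iff_of_true (Or.inl hGa) (by trivial)
      · intro i hi hi'
        simp only [Walk.length_cons, Walk.length_nil] at hi' ⊢
        have : i = 1 := by omega
        subst this
        simp only [Walk.getVert_cons_succ, Walk.getVert_zero]
        exact iff_of_true (Or.inl hGa) (by trivial)
end
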